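/- Let q be a prime power with q ≡ 1 (mod 4), let Q be the Jacobsthal matrix of F_q, let R be the all-ones row vector of length q, and let B = [[0, R],[Rᵀ, Q]] of order q+1. Define the 2(q+1)×2(q+1) integer matrix H = B ⊗ [[1,1],[1,−1]] + I_{q+1} ⊗ [[1,−1],[−1,−1]] (Kronecker products). Then H is a symmetric Hadamard matrix of order 2(q+1): Hᵀ = H, all entries of H are ±1, and H·Hᵀ = 2(q+1)·I. -/

import Mathlib

open Matrix

open Kronecker

lemma jacobsthal_sum {F : Type*} [Field F] [Fintype F] [DecidableEq F]
    (hF : ringChar F ≠ 2) {e : F} (he : e ≠ 0) :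
    ∑ d : F, quadraticChar F d * quadraticChar F (d + e) = -1 := by
  classical
  rw [← Finset.sum_erase (a := (0:F))
    (f := fun d : F => quadraticChar F d * quadraticChar F (d + e)) Finset.univ (by simp)]
  have h1 : ∀ d ∈ Finset.univ.erase (0 : F),
      quadraticChar F d * quadraticChar F (d + e) = quadraticChar F (1 + e * d⁻¹) := by
    intro d hd
    have hd0 : d ≠ 0 := by simpa using (Finset.mem_erase.mp hd).1
    have : d + e = d * (1 + e * d⁻¹) := by field_simp
    rw [this, _root_.map_mul, ← mul_assoc, ← _root_.map_mul, ← sq,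
      quadraticChar_sq_one' hd0]
    ring
  rw [Finset.sum_congr rfl h1]
  have h2 : ∑ d ∈ Finset.univ.erase (0 : F), quadraticChar F (1 + e * d⁻¹)
      = ∑ t ∈ Finset.univ.erase (1 : F), quadraticChar F t := by
    apply Finset.sum_nbij' (i := fun d => 1 + e * d⁻¹) (j := fun t => e * (t - 1)⁻¹)
    · intro d hd
      have hd0 : d ≠ 0 := by simpa using (Finset.mem_erase.mp hd).1
      simp only [Finset.mem_erase, Finset.mem_univ, and_true]
      intro h
      apply he
      have : e * d⁻¹ = 0 := by linear_combination h
      rcases mul_eq_zero.mp this with h' | h'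
      · exact h'
      · exact absurd (inv_eq_zero.mp h') hd0
    · intro t ht
      have ht1 : t ≠ 1 := by simpa using (Finset.mem_erase.mp ht).1
      simp only [Finset.mem_erase, Finset.mem_univ, and_true]
      exact mul_ne_zero he (inv_ne_zero (sub_ne_zero.mpr ht1))
    · intro d hd
      have hd0 : d ≠ 0 := by simpa using (Finset.mem_erase.mp hd).1
      field_simp
      rw [show d + e - d = e by ring]; exact div_self he
    · intro t ht
      have ht1 : t ≠ 1 := by simpa using (Finset.mem_erase.mp ht).1
      have h0 : t - 1 ≠ 0 := sub_ne_zero.mpr ht1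
      field_simp
      ring
    · intros; rfl
  rw [h2]
  have := quadraticChar_sum_zero hF
  rw [← Finset.sum_erase_add Finset.univ _ (Finset.mem_univ (1:F))] at this
  simp only [_root_.map_one] at this
  linarith

/-- Paley's second construction: for a prime power `q ≡ 1 (mod 4)`, let `B` be the
matrix `[[0, R],[Rᵀ, Q]]` of order `q+1` (with `Q` the Jacobsthal matrix of `F_q` and `R`
the all-ones row), and let `H = B ⊗ [[1,1],[1,−1]] + I ⊗ [[1,−1],[−1,−1]]`. Then `H` is a
symmetric Hadamard matrix of order `2(q+1)`. -/
theorem paley_hadamard_type_II {F : Type*} [Field F] [Fintype F] [DecidableEq F]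
    (h4 : Fintype.card F % 4 = 1)
    (B : Matrix (Option F) (Option F) ℤ)
    (hB : ∀ i j : Option F, B i j =
      match i, j with
      | none, none => 0
      | none, some _ => 1
      | some _, none => 1
      | some u, some v => quadraticChar F (v - u))
    (H : Matrix (Option F × Fin 2) (Option F × Fin 2) ℤ)
    (hH : H = B ⊗ₖ !![1, 1; 1, -1] +
      (1 : Matrix (Option F) (Option F) ℤ) ⊗ₖ !![1, -1; -1, -1]) :
    Hᵀ = H ∧ (∀ i j, H i j = 1 ∨ H i j = -1) ∧
      H * Hᵀ = (2 * ((Fintype.card F : ℤ) + 1)) •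
        (1 : Matrix (Option F × Fin 2) (Option F × Fin 2) ℤ) := by
  classical
  have hF2 : ringChar F ≠ 2 := by
    intro h
    have := FiniteField.even_card_of_char_two h
    omega
  have hneg1 : quadraticChar F (-1) = 1 := by
    rw [quadraticChar_one_iff_isSquare (neg_ne_zero.mpr one_ne_zero)]
    exact FiniteField.isSquare_neg_one_iff.mpr (by omega)
  have hχsymm : ∀ u v : F, quadraticChar F (v - u) = quadraticChar F (u - v) := by
    intro u v
    rw [show u - v = -1 * (v - u) by ring, _root_.map_mul, hneg1, one_mul]
  have hBnn : B none none = 0 := by rw [hB]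
  have hBns : ∀ v : F, B none (some v) = 1 := fun v => by rw [hB]
  have hBsn : ∀ u : F, B (some u) none = 1 := fun u => by rw [hB]
  have hBss : ∀ u v : F, B (some u) (some v) = quadraticChar F (v - u) :=
    fun u v => by rw [hB]
  -- B is symmetric
  have hBsymm : Bᵀ = B := by
    ext i j
    rw [transpose_apply]
    match i, j with
    | none, none => rfl
    | none, some v => rw [hBns, hBsn]
    | some u, none => rw [hBns, hBsn]
    | some u, some v => rw [hBss, hBss]; exact hχsymm v u
  -- auxiliary sums
  have hsum0 : ∀ v : F, ∑ u : F, quadraticChar F (v - u) = 0 := by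
    intro v
    rw [← quadraticChar_sum_zero hF2]
    exact Fintype.sum_equiv (Equiv.subLeft v) _ _ (fun u => rfl)
  have hsum0' : ∀ u : F, ∑ w : F, quadraticChar F (w - u) = 0 := by
    intro u
    rw [← quadraticChar_sum_zero hF2]
    exact Fintype.sum_equiv (Equiv.subRight u) _ _ (fun w => rfl)
  have hsq : ∀ u : F, ∑ w : F, quadraticChar F (w - u) * quadraticChar F (u - w)
      = (Fintype.card F : ℤ) - 1 := by
    intro u
    have key : ∀ w : F, quadraticChar F (w - u) * quadraticChar F (u - w)
        = 1 - (if w = u then 1 else 0) := by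
      intro w
      by_cases h : w = u
      · simp [h]
      · rw [← hχsymm u w, ← sq, quadraticChar_sq_one (sub_ne_zero.mpr h)]
        simp [h]
    rw [Finset.sum_congr rfl (fun w _ => key w), Finset.sum_sub_distrib,
      Finset.sum_const, Finset.sum_ite_eq' Finset.univ u (fun _ => (1:ℤ))]
    simp [Finset.card_univ]
  have hjac : ∀ u v : F, u ≠ v →
      ∑ w : F, quadraticChar F (w - u) * quadraticChar F (v - w) = -1 := by
    intro u v huv
    have he : v - u ≠ 0 := sub_ne_zero.mpr (Ne.symm huv)
    calc ∑ w : F, quadraticChar F (w - u) * quadraticChar F (v - w)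
        = ∑ w : F, quadraticChar F (w - v) * quadraticChar F ((w - v) + (v - u)) := by
          refine Finset.sum_congr rfl fun w _ => ?_
          rw [hχsymm w v, show w - u = (w - v) + (v - u) by ring]
          ring
      _ = ∑ d : F, quadraticChar F d * quadraticChar F (d + (v - u)) :=
          Fintype.sum_equiv (Equiv.subRight v) _ _ (fun w => rfl)
      _ = -1 := jacobsthal_sum hF2 he
  -- B * B = q • 1
  have hBB : B * B = (Fintype.card F : ℤ) • 1 := by
    ext i j
    rw [mul_apply, Fintype.sum_option]
    match i, j with
    | none, none =>
      simp only [hBnn, hBns, hBsn, mul_zero, one_mul, Matrix.smul_apply,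
        Matrix.one_apply_eq, Finset.sum_const, Finset.card_univ, smul_eq_mul, mul_one]
      push_cast
      ring
    | none, some v =>
      rw [Matrix.smul_apply, Matrix.one_apply_ne (by simp)]
      simp only [hBnn, hBns, hBsn, hBss, zero_mul, one_mul, zero_add, smul_zero]
      exact hsum0 v
    | some u, none =>
      rw [Matrix.smul_apply, Matrix.one_apply_ne (by simp)]
      simp only [hBnn, hBns, hBsn, hBss, mul_zero, mul_one, zero_add, smul_zero]
      exact hsum0' u
    | some u, some v =>
      by_cases huv : u = v
      · subst huv
        rw [Matrix.smul_apply, Matrix.one_apply_eq]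
        simp only [hBns, hBsn, hBss, one_mul, smul_eq_mul, mul_one]
        rw [hsq u]
        ring
      · rw [Matrix.smul_apply, Matrix.one_apply_ne (by simp [huv])]
        simp only [hBns, hBsn, hBss, one_mul, smul_zero]
        rw [hjac u v huv]
        ring
  -- facts about the 2×2 blocks
  set S : Matrix (Fin 2) (Fin 2) ℤ := !![1, 1; 1, -1] with hSdef
  set T : Matrix (Fin 2) (Fin 2) ℤ := !![1, -1; -1, -1] with hTdef
  have hSsymm : Sᵀ = S := by
    ext i j; fin_cases i <;> fin_cases j <;> simp [hSdef]
  have hTsymm : Tᵀ = T := by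
    ext i j; fin_cases i <;> fin_cases j <;> simp [hTdef]
  have hSS : S * S = (2 : ℤ) • 1 := by
    ext i j
    fin_cases i <;> fin_cases j <;>
      simp [hSdef, mul_apply, Fin.sum_univ_two, Matrix.one_apply]
  have hTT : T * T = (2 : ℤ) • 1 := by
    ext i j
    fin_cases i <;> fin_cases j <;>
      simp [hTdef, mul_apply, Fin.sum_univ_two, Matrix.one_apply]
  have hST : S * T + T * S = 0 := by
    ext i j
    fin_cases i <;> fin_cases j <;>
      simp [hSdef, hTdef, mul_apply, Fin.sum_univ_two]
  -- symmetry of H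
  have hHsymm : Hᵀ = H := by
    rw [hH, transpose_add, ← kroneckerMap_transpose, ← kroneckerMap_transpose,
      hBsymm, transpose_one, hSsymm, hTsymm]
  refine ⟨hHsymm, ?_, ?_⟩
  · -- entries are ±1
    rintro ⟨x, k⟩ ⟨y, l⟩
    rw [hH]
    simp only [Matrix.add_apply, kroneckerMap_apply]
    by_cases hxy : x = y
    · subst hxy
      have hBxx : B x x = 0 := by
        cases x
        · exact hBnn
        · rw [hBss]; simp
      rw [hBxx, zero_mul, Matrix.one_apply_eq, one_mul, zero_add]
      fin_cases k <;> fin_cases l <;> simp [hTdef]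
    · have h1 : (1 : Matrix (Option F) (Option F) ℤ) x y = 0 := Matrix.one_apply_ne hxy
      rw [h1, zero_mul, add_zero]
      have hBxy : B x y = 1 ∨ B x y = -1 := by
        match x, y with
        | none, none => exact absurd rfl hxy
        | none, some v => left; exact hBns v
        | some u, none => left; exact hBsn u
        | some u, some v =>
          have hvu : v - u ≠ 0 := by
            intro h
            exact hxy (by rw [sub_eq_zero] at h; rw [h])
          rw [hBss]
          exact quadraticChar_dichotomy hvu
      rcases hBxy with h | h <;> rw [h] <;>
        fin_cases k <;> fin_cases l <;> simp [hSdef] <;> norm_num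
  · -- H * Hᵀ = 2(q+1) • 1
    rw [hHsymm, hH, add_mul, mul_add, mul_add, ← mul_kronecker_mul, ← mul_kronecker_mul,
      ← mul_kronecker_mul, ← mul_kronecker_mul, Matrix.mul_one, Matrix.one_mul,
      Matrix.one_mul, hBB, hSS, hTT]
    have hmid : B ⊗ₖ (S * T) + B ⊗ₖ (T * S) = 0 := by
      rw [← kronecker_add, hST, kronecker_zero]
    have : ((Fintype.card F : ℤ) • (1 : Matrix (Option F) (Option F) ℤ)) ⊗ₖ
          ((2:ℤ) • (1 : Matrix (Fin 2) (Fin 2) ℤ)) + B ⊗ₖ (S * T) +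
        (B ⊗ₖ (T * S) + (1 : Matrix (Option F) (Option F) ℤ) ⊗ₖ
          ((2:ℤ) • (1 : Matrix (Fin 2) (Fin 2) ℤ)))
        = ((Fintype.card F : ℤ) • (1 : Matrix (Option F) (Option F) ℤ)) ⊗ₖ
          ((2:ℤ) • (1 : Matrix (Fin 2) (Fin 2) ℤ)) +
          (1 : Matrix (Option F) (Option F) ℤ) ⊗ₖ
          ((2:ℤ) • (1 : Matrix (Fin 2) (Fin 2) ℤ)) := by
      rw [add_assoc, ← add_assoc (B ⊗ₖ (S*T)), hmid]
      abel
    rw [this, smul_kronecker, kronecker_smul, one_kronecker_one,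
      smul_smul, ← add_smul]
    congr 1
    ring
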